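/- For n ≥ 3 and a fixed value i with 1 < i < n, the number of permutations σ ∈ S_n in which i is a vertical separator equals 2(n−3)(n−2)!. -/

import Mathlib

/-- The entry at position `k` of `σ` (0-indexed) is a *vertical separator*:
there are positions `j, j+1, j+2` with `k = j+1` and `|σ j - σ (j+2)| = 1`. -/
def IsVSepPos {n : ℕ} (σ : Equiv.Perm (Fin n)) (k : Fin n) : Prop :=
  ∃ (j : ℕ) (h : j + 2 < n), (k : ℕ) = j + 1 ∧
    (((σ ⟨j, by omega⟩).val : ℤ) - ((σ ⟨j + 2, h⟩).val : ℤ)).natAbs = 1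

/-- The value `b` is a vertical separator of `σ`. -/
def IsVSepVal {n : ℕ} (σ : Equiv.Perm (Fin n)) (b : Fin n) : Prop :=
  IsVSepPos σ (σ⁻¹ b)

/-- The value `a` is a *horizontal separator* of `σ`: the values `a-1` and `a+1`
occupy adjacent positions of `σ` (their sum is `2a` and they differ by `2`). -/
def IsHSepVal {n : ℕ} (σ : Equiv.Perm (Fin n)) (a : Fin n) : Prop :=
  ∃ (j : ℕ) (h : j + 1 < n),
    (((σ ⟨j, by omega⟩).val : ℤ) - ((σ ⟨j + 1, h⟩).val : ℤ)).natAbs = 2 ∧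
    ((σ ⟨j, by omega⟩).val : ℤ) + ((σ ⟨j + 1, h⟩).val : ℤ) = 2 * (a : ℤ)

/-- `σ` has a bond at positions `j, j+1`. -/
def PermBondAt {n : ℕ} (σ : Equiv.Perm (Fin n)) (j : ℕ) (h : j + 1 < n) : Prop :=
  (((σ ⟨j, by omega⟩).val : ℤ) - ((σ ⟨j + 1, h⟩).val : ℤ)).natAbs = 1

/-- The sequence obtained from `σ` by deleting the entry at position `p`
and standardizing. -/
def delSeq {n : ℕ} (σ : Equiv.Perm (Fin n)) (p : Fin n) : Fin (n - 1) → ℕ :=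
  fun k =>
    let q : Fin n :=
      if (k : ℕ) < (p : ℕ) then ⟨k, by have := k.isLt; omega⟩
      else ⟨(k : ℕ) + 1, by have := k.isLt; omega⟩
    if (σ q).val < (σ p).val then (σ q).val else (σ q).val - 1

/-- A sequence has a bond at positions `j, j+1`. -/
def SeqBondAt {m : ℕ} (g : Fin m → ℕ) (j : ℕ) (h : j + 1 < m) : Prop :=
  ((g ⟨j, by omega⟩ : ℤ) - (g ⟨j + 1, h⟩ : ℤ)).natAbs = 1

/-- The number of bonds of a sequence. -/
noncomputable def seqBondCount {m : ℕ} (g : Fin m → ℕ) : ℕ :=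
  Nat.card {p : Fin m × Fin m //
    (p.2 : ℕ) = (p.1 : ℕ) + 1 ∧ ((g p.1 : ℤ) - (g p.2 : ℤ)).natAbs = 1}

/-- The number of bonds of `σ`. -/
noncomputable def bondCount {n : ℕ} (σ : Equiv.Perm (Fin n)) : ℕ :=
  Nat.card {p : Fin n × Fin n //
    (p.2 : ℕ) = (p.1 : ℕ) + 1 ∧ (((σ p.1).val : ℤ) - ((σ p.2).val : ℤ)).natAbs = 1}

open Finset Equiv

lemma exists_perm3 {α : Type*} [DecidableEq α] {x1 x2 x3 y1 y2 y3 : α}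
    (hx12 : x1 ≠ x2) (hx13 : x1 ≠ x3) (hx23 : x2 ≠ x3)
    (hy12 : y1 ≠ y2) (hy13 : y1 ≠ y3) (hy23 : y2 ≠ y3) :
    ∃ σ : Equiv.Perm α, σ x1 = y1 ∧ σ x2 = y2 ∧ σ x3 = y3 := by
  set s1 := Equiv.swap x1 y1 with hs1
  have e1 : s1 x1 = y1 := Equiv.swap_apply_left _ _
  have hne2 : s1 x2 ≠ y1 := by
    rw [← e1]; exact fun h => hx12.symm (s1.injective h)
  have hne3 : s1 x3 ≠ y1 := by
    rw [← e1]; exact fun h => hx13.symm (s1.injective h)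
  have hne23 : s1 x2 ≠ s1 x3 := fun h => hx23 (s1.injective h)
  set s2 := Equiv.swap (s1 x2) y2 with hs2
  have e2 : s2 (s1 x2) = y2 := Equiv.swap_apply_left _ _
  have f2 : s2 y1 = y1 := Equiv.swap_apply_of_ne_of_ne (fun h => hne2 h.symm) hy12
  have hne3' : s2 (s1 x3) ≠ y1 := by
    rw [← f2]; exact fun h => hne3 (s2.injective h)
  have hne3'' : s2 (s1 x3) ≠ y2 := by
    rw [← e2]; exact fun h => hne23.symm (s2.injective h)
  set s3 := Equiv.swap (s2 (s1 x3)) y3 with hs3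
  have e3 : s3 (s2 (s1 x3)) = y3 := Equiv.swap_apply_left _ _
  have f3 : s3 y1 = y1 := Equiv.swap_apply_of_ne_of_ne (fun h => hne3' h.symm) hy13
  have g3 : s3 y2 = y2 := Equiv.swap_apply_of_ne_of_ne (fun h => hne3'' h.symm) hy23
  refine ⟨s3 * s2 * s1, ?_, ?_, ?_⟩
  · simp only [Equiv.Perm.mul_apply, e1, f2, f3]
  · simp only [Equiv.Perm.mul_apply, e2, g3]
  · simp only [Equiv.Perm.mul_apply, e3]

lemma card_fix3 {n : ℕ} (x1 x2 x3 y1 y2 y3 : Fin n)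
    (hx12 : x1 ≠ x2) (hx13 : x1 ≠ x3) (hx23 : x2 ≠ x3)
    (hy12 : y1 ≠ y2) (hy13 : y1 ≠ y3) (hy23 : y2 ≠ y3) :
    Nat.card {σ : Equiv.Perm (Fin n) // σ x1 = y1 ∧ σ x2 = y2 ∧ σ x3 = y3}
      = (n - 3).factorial := by
  classical
  obtain ⟨σ₀, h1, h2, h3⟩ := exists_perm3 hx12 hx13 hx23 hy12 hy13 hy23
  set p : Fin n → Prop := fun z => ¬(z = x1 ∨ z = x2 ∨ z = x3) with hp
  have e1 : {σ : Equiv.Perm (Fin n) // σ x1 = y1 ∧ σ x2 = y2 ∧ σ x3 = y3}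
      ≃ {τ : Equiv.Perm (Fin n) // τ x1 = x1 ∧ τ x2 = x2 ∧ τ x3 = x3} := by
    refine Equiv.subtypeEquiv (Equiv.mulLeft σ₀⁻¹) fun σ => ?_
    have : ∀ z y : Fin n, σ₀ z = y → ((σ₀⁻¹ * σ) z = z ↔ σ z = y) := by
      intro z y hzy
      constructor
      · intro h
        have := congrArg σ₀ h
        simpa [Equiv.Perm.mul_apply, hzy] using this
      · intro h
        simp [Equiv.Perm.mul_apply, h, ← hzy]
    simp only [Equiv.coe_mulLeft]
    rw [this x1 y1 h1, this x2 y2 h2, this x3 y3 h3]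
  have e2 : {τ : Equiv.Perm (Fin n) // τ x1 = x1 ∧ τ x2 = x2 ∧ τ x3 = x3}
      ≃ {f : Equiv.Perm (Fin n) // ∀ z, ¬ p z → f z = z} := by
    refine Equiv.subtypeEquivRight fun f => ?_
    constructor
    · rintro ⟨hf1, hf2, hf3⟩ z hz
      have hz' : z = x1 ∨ z = x2 ∨ z = x3 := by
        by_contra hc
        exact hz (by simpa [hp] using hc)
      rcases hz' with rfl | rfl | rfl <;> assumption
    · intro h
      exact ⟨h x1 (by simp [hp]), h x2 (by simp [hp]), h x3 (by simp [hp])⟩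
  have e3 := (Equiv.Perm.subtypeEquivSubtypePerm p)
  have hcard : Fintype.card {z : Fin n // p z} = n - 3 := by
    have : Fintype.card {z : Fin n // p z}
        = Fintype.card (Fin n) - Fintype.card {z : Fin n // z = x1 ∨ z = x2 ∨ z = x3} :=
      Fintype.card_subtype_compl _
    rw [this]
    have : Fintype.card {z : Fin n // z = x1 ∨ z = x2 ∨ z = x3} = 3 := by
      rw [Fintype.card_subtype]
      have : (univ.filter fun z : Fin n => z = x1 ∨ z = x2 ∨ z = x3)
          = {x1, x2, x3} := by
        ext z; simp [mem_insert]
      rw [this]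
      rw [card_insert_of_notMem (by simp [hx12, hx13]),
        card_insert_of_notMem (by simp [hx23]), card_singleton]
    rw [this, Fintype.card_fin]
  rw [Nat.card_congr (e1.trans (e2.trans e3.symm))]
  rw [Nat.card_eq_fintype_card, Fintype.card_perm, hcard]

lemma pair_count {n : ℕ} (hn : 3 ≤ n) (a : Fin n) (h1 : 0 < (a:ℕ)) (h2 : (a:ℕ) < n - 1) :
    (Finset.univ.filter fun p : Fin n × Fin n =>
      ((p.1.val : ℤ) - (p.2.val : ℤ)).natAbs = 1 ∧ p.1 ≠ a ∧ p.2 ≠ a).card = 2 * (n - 3) := by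
  have key : (Finset.univ.filter fun p : Fin n × Fin n =>
      ((p.1.val : ℤ) - (p.2.val : ℤ)).natAbs = 1 ∧ p.1 ≠ a ∧ p.2 ≠ a).card
      = (((Finset.range (n-1)).filter fun c => c ≠ (a:ℕ) - 1 ∧ c ≠ (a:ℕ)) ×ˢ
          (Finset.univ : Finset Bool)).card := by
    refine Finset.card_bij' (fun p _ => (min p.1.val p.2.val, decide (p.1.val < p.2.val)))
      (fun q _ => if q.2 then ((⟨min q.1 (n-2), by omega⟩ : Fin n), (⟨min q.1 (n-2) + 1, by omega⟩ : Fin n))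
        else ((⟨min q.1 (n-2) + 1, by omega⟩ : Fin n), (⟨min q.1 (n-2), by omega⟩ : Fin n)))
      ?_ ?_ ?_ ?_
    · rintro ⟨p1, p2⟩ hp
      simp only [Finset.mem_filter, Finset.mem_univ, true_and] at hp
      obtain ⟨habs, hpa1, hpa2⟩ := hp
      have h1' : p1.val ≠ a.val := fun h => hpa1 (Fin.ext h)
      have h2' : p2.val ≠ a.val := fun h => hpa2 (Fin.ext h)
      have hb1 := p1.isLt
      have hb2 := p2.isLt
      simp only [Finset.mem_product, Finset.mem_filter, Finset.mem_range, Finset.mem_univ,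
        and_true]
      omega
    · rintro ⟨c, d⟩ hq
      simp only [Finset.mem_product, Finset.mem_filter, Finset.mem_range, Finset.mem_univ,
        and_true] at hq
      obtain ⟨hc1, hc2, hc3⟩ := hq
      have hmin : min c (n-2) = c := by omega
      rcases d with _ | _ <;>
        simp only [if_true, if_false, Bool.false_eq_true, Finset.mem_filter, Finset.mem_univ,
          true_and, hmin] <;>
        refine ⟨by omega, fun h => ?_, fun h => ?_⟩ <;>
        · have := congrArg Fin.val h
          simp only [hmin] at this
          omega
    · rintro ⟨p1, p2⟩ hp
      simp only [Finset.mem_filter, Finset.mem_univ, true_and] at hp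
      obtain ⟨habs, hpa1, hpa2⟩ := hp
      have hb1 := p1.isLt
      have hb2 := p2.isLt
      dsimp only
      rcases lt_or_gt_of_ne (show p1.val ≠ p2.val by omega) with hlt | hgt
      · rw [if_pos (by simpa using hlt)]
        refine Prod.ext (Fin.ext ?_) (Fin.ext ?_) <;> simp <;> omega
      · rw [if_neg (by simp; omega)]
        refine Prod.ext (Fin.ext ?_) (Fin.ext ?_) <;> simp <;> omega
    · rintro ⟨c, d⟩ hq
      simp only [Finset.mem_product, Finset.mem_filter, Finset.mem_range, Finset.mem_univ,
        and_true] at hq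
      obtain ⟨hc1, hc2, hc3⟩ := hq
      have hmin : min c (n-2) = c := by omega
      rcases d with _ | _ <;> simp [hmin] <;> omega
  rw [key, Finset.card_product, Finset.card_univ, Fintype.card_bool]
  have : ((Finset.range (n-1)).filter fun c => c ≠ (a:ℕ) - 1 ∧ c ≠ (a:ℕ)).card = n - 3 := by
    have hs : ((Finset.range (n-1)).filter fun c => c ≠ (a:ℕ) - 1 ∧ c ≠ (a:ℕ))
        = Finset.range (n-1) \ {(a:ℕ) - 1, (a:ℕ)} := by
      ext c
      simp only [Finset.mem_filter, Finset.mem_sdiff, Finset.mem_insert, Finset.mem_singleton,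
        Finset.mem_range]
      tauto
    rw [hs, Finset.card_sdiff_of_subset (by
      intro c hc; simp only [Finset.mem_insert, Finset.mem_singleton] at hc
      simp only [Finset.mem_range]; omega)]
    rw [Finset.card_insert_of_notMem (by simp; omega), Finset.card_singleton,
      Finset.card_range]
    omega
  rw [this]
  omega

lemma count_j {n : ℕ} (hn : 3 ≤ n) (a : Fin n) (h1 : 0 < (a:ℕ)) (h2 : (a:ℕ) < n - 1)
    (j : ℕ) (p0 p1 p2 : Fin n) (hp0 : (p0:ℕ) = j) (hp1 : (p1:ℕ) = j + 1)
    (hp2 : (p2:ℕ) = j + 2) :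
    (Finset.univ.filter fun σ : Equiv.Perm (Fin n) =>
        σ p1 = a ∧ (((σ p0).val : ℤ) - ((σ p2).val : ℤ)).natAbs = 1).card
      = 2 * (n - 3) * (n - 3).factorial := by
  have hne01 : p0 ≠ p1 := fun h => by rw [Fin.ext_iff, hp0, hp1] at h; omega
  have hne02 : p0 ≠ p2 := fun h => by rw [Fin.ext_iff, hp0, hp2] at h; omega
  have hne12 : p1 ≠ p2 := fun h => by rw [Fin.ext_iff, hp1, hp2] at h; omega
  rw [Finset.card_eq_sum_card_fiberwise
    (f := fun σ : Equiv.Perm (Fin n) => (σ p0, σ p2)) (t := Finset.univ)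
    (fun σ _ => Finset.mem_univ _)]
  have step : ∀ bc ∈ (Finset.univ : Finset (Fin n × Fin n)),
      ((Finset.univ.filter fun σ : Equiv.Perm (Fin n) =>
        σ p1 = a ∧ (((σ p0).val : ℤ) - ((σ p2).val : ℤ)).natAbs = 1).filter
          fun σ => (σ p0, σ p2) = bc).card
      = if (((bc.1.val : ℤ) - (bc.2.val : ℤ)).natAbs = 1 ∧ bc.1 ≠ a ∧ bc.2 ≠ a)
          then (n - 3).factorial else 0 := by
    rintro ⟨b, c⟩ -
    rw [Finset.filter_filter]
    by_cases hcond : ((b.val : ℤ) - (c.val : ℤ)).natAbs = 1 ∧ b ≠ a ∧ c ≠ a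
    · rw [if_pos hcond]
      obtain ⟨habs, hba, hca⟩ := hcond
      have hfil : (Finset.univ.filter fun σ : Equiv.Perm (Fin n) =>
          (σ p1 = a ∧ (((σ p0).val : ℤ) - ((σ p2).val : ℤ)).natAbs = 1) ∧ (σ p0, σ p2) = (b, c))
          = Finset.univ.filter fun σ : Equiv.Perm (Fin n) =>
            σ p0 = b ∧ σ p1 = a ∧ σ p2 = c := by
        apply Finset.filter_congr
        intro σ _
        constructor
        · rintro ⟨⟨hA, -⟩, hB⟩
          rw [Prod.mk.injEq] at hB
          exact ⟨hB.1, hA, hB.2⟩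
        · rintro ⟨hb', ha', hc'⟩
          refine ⟨⟨ha', ?_⟩, by rw [hb', hc']⟩
          rw [hb', hc']; exact habs
      rw [hfil]
      have hbc : b ≠ c := fun h => by rw [h] at habs; simp at habs
      have := card_fix3 p0 p1 p2 b a c hne01 hne02 hne12 hba hbc (fun h => hca h.symm)
      rw [Nat.card_eq_fintype_card, Fintype.card_subtype] at this
      exact this
    · rw [if_neg hcond]
      rw [Finset.card_eq_zero, Finset.filter_eq_empty_iff]
      rintro σ - ⟨⟨hA, hbond⟩, hB⟩
      rw [Prod.mk.injEq] at hB
      apply hcond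
      refine ⟨by rw [← hB.1, ← hB.2]; exact hbond, fun h => ?_, fun h => ?_⟩
      · exact hne01 (σ.injective (by rw [hB.1, h, hA]))
      · exact hne12 (σ.injective (by rw [hB.2, h, hA]))
  rw [Finset.sum_congr rfl step,
    show (∑ bc : Fin n × Fin n,
        if (((bc.1.val : ℤ) - (bc.2.val : ℤ)).natAbs = 1 ∧ bc.1 ≠ a ∧ bc.2 ≠ a)
          then (n - 3).factorial else 0)
      = ∑ bc ∈ Finset.univ.filter (fun bc : Fin n × Fin n =>
          ((bc.1.val : ℤ) - (bc.2.val : ℤ)).natAbs = 1 ∧ bc.1 ≠ a ∧ bc.2 ≠ a),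
          (n - 3).factorial from (Finset.sum_filter _ _).symm,
    Finset.sum_const, smul_eq_mul, pair_count hn a h1 h2]


set_option maxHeartbeats 1000000 in
/-- for a fixed non-extreme value `a` (i.e. `1 < i < n`,
0-indexed `0 < a < n-1`), the number of `σ ∈ S_n` in which `a` is a vertical
separator is `2(n-3)(n-2)!`. -/
theorem stmt13 {n : ℕ} (hn : 3 ≤ n) (a : Fin n) (h1 : 0 < (a : ℕ)) (h2 : (a : ℕ) < n - 1) :
    Nat.card {σ : Equiv.Perm (Fin n) // IsVSepVal σ a}
      = 2 * (n - 3) * (n - 2).factorial := by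
  classical
  rw [Nat.card_eq_fintype_card, Fintype.card_subtype]
  rw [Finset.card_eq_sum_card_fiberwise
    (f := fun σ : Equiv.Perm (Fin n) =>
      (⟨min ((σ⁻¹ a).val - 1) (n - 3), by omega⟩ : Fin (n - 2)))
    (t := Finset.univ) (fun σ _ => Finset.mem_univ _)]
  have step : ∀ jj ∈ (Finset.univ : Finset (Fin (n - 2))),
      ((Finset.univ.filter fun σ : Equiv.Perm (Fin n) => IsVSepVal σ a).filter
        fun σ : Equiv.Perm (Fin n) =>
          (⟨min ((σ⁻¹ a).val - 1) (n - 3), by omega⟩ : Fin (n - 2)) = jj).card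
      = 2 * (n - 3) * (n - 3).factorial := by
    rintro jj -
    have hjj := jj.isLt
    have hj2 : jj.val + 2 < n := by omega
    rw [Finset.filter_filter]
    have hfil : (Finset.univ.filter fun σ : Equiv.Perm (Fin n) =>
        IsVSepVal σ a ∧
          (⟨min ((σ⁻¹ a).val - 1) (n - 3), by omega⟩ : Fin (n - 2)) = jj)
        = Finset.univ.filter fun σ : Equiv.Perm (Fin n) =>
          σ ⟨jj.val + 1, by omega⟩ = a ∧
          (((σ ⟨jj.val, by omega⟩).val : ℤ) - ((σ ⟨jj.val + 2, hj2⟩).val : ℤ)).natAbs = 1 := by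
      apply Finset.filter_congr
      intro σ _
      constructor
      · rintro ⟨⟨j', h', hk, hb⟩, hjeq⟩
        have hj' : j' ≤ n - 3 := by omega
        have hval : min ((σ⁻¹ a).val - 1) (n - 3) = jj.val := congrArg Fin.val hjeq
        have hjq : j' = jj.val := by omega
        have e0 : (⟨jj.val, by omega⟩ : Fin n) = ⟨j', by omega⟩ := Fin.ext (by simpa using hjq.symm)
        have e1 : (⟨jj.val + 1, by omega⟩ : Fin n) = σ⁻¹ a := Fin.ext (by rw [hk]; simp [hjq])
        have e2 : (⟨jj.val + 2, hj2⟩ : Fin n) = ⟨j' + 2, h'⟩ := Fin.ext (by simp [hjq])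
        have t1 : σ (⟨jj.val + 1, by omega⟩ : Fin n) = a := by
          rw [e1]; exact σ.apply_symm_apply a
        have t2 : (((σ (⟨jj.val, by omega⟩ : Fin n)).val : ℤ)
            - ((σ (⟨jj.val + 2, hj2⟩ : Fin n)).val : ℤ)).natAbs = 1 := by
          simp only [e0, e2]; exact hb
        exact ⟨t1, t2⟩
      · rintro ⟨hσ, hb⟩
        have hinv : σ⁻¹ a = ⟨jj.val + 1, by omega⟩ := by
          rw [← hσ]; exact σ.symm_apply_apply _
        refine ⟨⟨jj.val, hj2, by rw [hinv], hb⟩, ?_⟩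
        apply Fin.ext
        simp only [hinv]
        omega
    rw [hfil]
    exact count_j hn a h1 h2 jj.val ⟨jj.val, by omega⟩ ⟨jj.val + 1, by omega⟩
      ⟨jj.val + 2, hj2⟩ rfl rfl rfl
  rw [Finset.sum_congr rfl step, Finset.sum_const, Finset.card_univ, Fintype.card_fin,
    smul_eq_mul]
  have hfact : (n - 2).factorial = (n - 2) * (n - 3).factorial := by
    have h3 : n - 2 = (n - 3) + 1 := by omega
    rw [h3, Nat.factorial_succ]
  rw [hfact]
  ring
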